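/- Let R be an integral domain and let a be a nonzero nonunit element of R such that there is exactly one prime ideal of R minimal over aR. Then a is pseudo-irreducible. -/
import Mathlib

/-- A nonzero nonunit `c` of an integral domain is pseudo-irreducible if whenever
`c = a * b` with `aR + bR = R`, then `a` or `b` is a unit. -/
def PseudoIrreducible {R : Type*} [CommRing R] (c : R) : Prop :=
  c ≠ 0 ∧ ¬IsUnit c ∧ ∀ a b : R, c = a * b →
    Ideal.span {a} + Ideal.span {b} = ⊤ → IsUnit a ∨ IsUnit b

theorem pseudoIrreducible_of_unique_minimal_prime {R : Type*} [CommRing R] [IsDomain R]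
    (a : R) (ha : a ≠ 0) (hu : ¬IsUnit a)
    (huniq : ∃! P : Ideal R, P ∈ (Ideal.span {a}).minimalPrimes) :
    PseudoIrreducible a := by
  obtain ⟨P, hP, hPuniq⟩ := huniq
  refine ⟨ha, hu, fun b c habc hsum => ?_⟩
  by_contra h
  push_neg at h
  obtain ⟨hb, hc⟩ := h
  have hPprime : P.IsPrime := hP.1.1
  have haP : a ∈ P := hP.1.2 (Ideal.subset_span rfl)
  have hbc : b ∈ P ∨ c ∈ P := hPprime.mem_or_mem (habc ▸ haP)
  -- In either case, find a maximal ideal containing both b and c.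
  have key : ∀ x y : R, x ∈ P → ¬IsUnit y → a = x * y →
      ∃ M : Ideal R, x ∈ M ∧ y ∈ M ∧ M ≠ ⊤ := by
    intro x y hxP hy hxy
    obtain ⟨M, hM, hyM⟩ := Ideal.exists_le_maximal (Ideal.span {y})
      (by simpa [Ideal.span_singleton_eq_top] using hy)
    have hMprime : M.IsPrime := hM.isPrime
    have haM : Ideal.span {a} ≤ M := by
      rw [Ideal.span_singleton_le_iff_mem, hxy]
      exact M.mul_mem_left x (hyM (Ideal.subset_span rfl))
    obtain ⟨Q, hQ, hQM⟩ := Ideal.exists_minimalPrimes_le haM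
    have : Q = P := hPuniq Q hQ
    exact ⟨M, hQM (this ▸ hxP), hyM (Ideal.subset_span rfl), hM.ne_top⟩
  rcases hbc with hbP | hcP
  · obtain ⟨M, hbM, hcM, hMne⟩ := key b c hbP hc habc
    exact hMne (top_le_iff.mp (hsum ▸ sup_le ((Ideal.span_singleton_le_iff_mem M).mpr hbM)
      ((Ideal.span_singleton_le_iff_mem M).mpr hcM)))
  · obtain ⟨M, hcM, hbM, hMne⟩ := key c b hcP hb (by rw [habc, mul_comm])
    exact hMne (top_le_iff.mp (hsum ▸ sup_le ((Ideal.span_singleton_le_iff_mem M).mpr hbM)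
      ((Ideal.span_singleton_le_iff_mem M).mpr hcM)))
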